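/- Let J be a finite set, v̄_j > 0, φ_j := φ_{v̄_j}, ψ_j(z) := v̄_j/(e(1−z)²) for 0 ≤ z < 1 − 1/e and 0 for 1 − 1/e ≤ z ≤ 1; let Q_j : [0,1] → [0,1] be measurable and U₀ ≥ 0, and set T(z) = Σ_{j∈J} φ_j(z)·Q_j(z) − U₀ − ∫_0^z Σ_{j∈J} ψ_j(s)·Q_j(s) ds. Then ∫_0^1 Σ_{j∈J} φ_j(z) dz − ∫_0^1 T(z) dz ≥ Σ_{j∈J} v̄_j / e. -/

import Mathlib

/-- The equal-revenue quantile function: `φ_{v̄}(z) = v̄/(e(1−z))` for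
`z < 1 − 1/e` and `φ_{v̄}(z) = v̄` for `z ≥ 1 − 1/e`. -/
noncomputable def erQuantile (vb z : ℝ) : ℝ :=
  if z < 1 - 1 / Real.exp 1 then vb / (Real.exp 1 * (1 - z)) else vb

/-- Its derivative off `z = 1 − 1/e`: `ψ(z) = v̄/(e(1−z)²)` for `z < 1 − 1/e`
and `0` for `z ≥ 1 − 1/e`. -/
noncomputable def erQuantileDeriv (vb z : ℝ) : ℝ :=
  if z < 1 - 1 / Real.exp 1 then vb / (Real.exp 1 * (1 - z) ^ 2) else 0

open MeasureTheory Set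

lemma er_c_pos : (0:ℝ) < 1 - 1 / Real.exp 1 := by
  have h := Real.exp_one_gt_d9
  have he : (0:ℝ) < Real.exp 1 := Real.exp_pos 1
  rw [sub_pos, div_lt_one he]; linarith

lemma er_c_lt_one : 1 - 1 / Real.exp 1 < 1 := by
  have he : (0:ℝ) < Real.exp 1 := Real.exp_pos 1
  have : 0 < 1 / Real.exp 1 := by positivity
  linarith

lemma erQuantile_nonneg {vb : ℝ} (hvb : 0 ≤ vb) (z : ℝ) : 0 ≤ erQuantile vb z := by
  unfold erQuantile; split_ifs with h
  · have he : (0:ℝ) < Real.exp 1 := Real.exp_pos 1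
    have h1 : 0 < 1 / Real.exp 1 := by positivity
    have : 0 < 1 - z := by linarith
    positivity
  · exact hvb

lemma erQuantile_le {vb : ℝ} (hvb : 0 ≤ vb) (z : ℝ) : erQuantile vb z ≤ vb := by
  unfold erQuantile; split_ifs with h
  · have he : (0:ℝ) < Real.exp 1 := Real.exp_pos 1
    have h1 : 1 / Real.exp 1 ≤ 1 - z := by linarith
    have h2 := (div_le_iff₀ he).mp h1
    exact div_le_self hvb (by nlinarith)
  · exact le_refl _

lemma erQuantileDeriv_nonneg {vb : ℝ} (hvb : 0 ≤ vb) (z : ℝ) : 0 ≤ erQuantileDeriv vb z := by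
  unfold erQuantileDeriv; split_ifs with h
  · have he : (0:ℝ) < Real.exp 1 := Real.exp_pos 1
    have h1 : 0 < 1 / Real.exp 1 := by positivity
    have : 0 < 1 - z := by linarith
    positivity
  · exact le_refl _

lemma erQuantileDeriv_le {vb : ℝ} (hvb : 0 ≤ vb) (z : ℝ) :
    erQuantileDeriv vb z ≤ vb * Real.exp 1 := by
  unfold erQuantileDeriv; split_ifs with h
  · have he : (0:ℝ) < Real.exp 1 := Real.exp_pos 1
    have h1 : 1 / Real.exp 1 ≤ 1 - z := by linarith
    have h0 : 0 < 1 - z := lt_of_lt_of_le (by positivity) h1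
    have h3 : (1 / Real.exp 1) ^ 2 ≤ (1 - z) ^ 2 := pow_le_pow_left₀ (by positivity) h1 2
    have h4 : 1 / Real.exp 1 ≤ Real.exp 1 * (1 - z) ^ 2 := by
      have : Real.exp 1 * (1 / Real.exp 1) ^ 2 = 1 / Real.exp 1 := by
        field_simp
      nlinarith
    have hpos : 0 < Real.exp 1 * (1 - z) ^ 2 := by positivity
    rw [div_le_iff₀ hpos]
    have h5 : vb * Real.exp 1 * (1 / Real.exp 1) ≤ vb * Real.exp 1 * (Real.exp 1 * (1 - z) ^ 2) :=
      mul_le_mul_of_nonneg_left h4 (by positivity)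
    calc vb = vb * Real.exp 1 * (1 / Real.exp 1) := by field_simp
      _ ≤ _ := h5
  · positivity

lemma erQuantile_measurable (vb : ℝ) : Measurable (erQuantile vb) := by
  unfold erQuantile
  exact Measurable.ite (measurableSet_lt measurable_id measurable_const)
    (measurable_const.div ((measurable_const.sub measurable_id).const_mul _)) measurable_const

lemma erQuantileDeriv_measurable (vb : ℝ) : Measurable (erQuantileDeriv vb) := by
  unfold erQuantileDeriv
  exact Measurable.ite (measurableSet_lt measurable_id measurable_const)
    (measurable_const.div (((measurable_const.sub measurable_id).pow_const 2).const_mul _))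
    measurable_const

lemma erQuantile_sub (vb z : ℝ) :
    erQuantile vb z - (1 - z) * erQuantileDeriv vb z
      = if z < 1 - 1 / Real.exp 1 then 0 else vb := by
  unfold erQuantile erQuantileDeriv; split_ifs with h
  · have he : (0:ℝ) < Real.exp 1 := Real.exp_pos 1
    have h1 : 1 / Real.exp 1 ≤ 1 - z := by linarith
    have h0 : 0 < 1 - z := lt_of_lt_of_le (by positivity) h1
    field_simp
    ring
  · ring

lemma II_of_bound (f : ℝ → ℝ) (a b : ℝ) (hf : Measurable f) (C : ℝ)
    (h : ∀ z ∈ Set.uIoc a b, |f z| ≤ C) : IntervalIntegrable f volume a b := by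
  refine (intervalIntegrable_const (c := C)).mono_fun' hf.aestronglyMeasurable ?_
  refine (ae_restrict_iff' measurableSet_uIoc).mpr (Filter.Eventually.of_forall ?_)
  intro x hx
  simpa [Real.norm_eq_abs] using h x hx

lemma integral_erQuantile {vb : ℝ} (hvb : 0 ≤ vb) :
    ∫ z in (0:ℝ)..1, erQuantile vb z = 2 * vb / Real.exp 1 := by
  have he : (0:ℝ) < Real.exp 1 := Real.exp_pos 1
  set c : ℝ := 1 - 1 / Real.exp 1 with hc
  have hc0 : 0 < c := er_c_pos
  have hc1 : c < 1 := er_c_lt_one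
  have h1c : (1:ℝ) - c = 1 / Real.exp 1 := by rw [hc]; ring
  have hII : ∀ a b : ℝ, IntervalIntegrable (erQuantile vb) volume a b := by
    intro a b
    refine II_of_bound _ a b (erQuantile_measurable vb) vb fun z _ => ?_
    exact abs_le.mpr ⟨by linarith [erQuantile_nonneg hvb z], erQuantile_le hvb z⟩
  have i1 : ∫ z in (0:ℝ)..c, erQuantile vb z = vb / Real.exp 1 := by
    have heq : Set.EqOn (erQuantile vb) (fun z => vb / (Real.exp 1 * (1 - z)))
        (Set.uIcc 0 c) := by
      intro z hz
      rw [Set.uIcc_of_le hc0.le] at hz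
      unfold erQuantile
      rcases lt_or_eq_of_le hz.2 with h | h
      · rw [if_pos h]
      · rw [if_neg (by rw [h]; exact lt_irrefl _)]
        show vb = vb / (Real.exp 1 * (1 - z))
        rw [h, h1c]
        field_simp
    rw [intervalIntegral.integral_congr heq]
    have hderiv : ∀ z ∈ Set.uIcc (0:ℝ) c,
        HasDerivAt (fun z => -(vb / Real.exp 1) * Real.log (1 - z))
          (vb / (Real.exp 1 * (1 - z))) z := by
      intro z hz
      rw [Set.uIcc_of_le hc0.le] at hz
      have h0 : 0 < 1 - z := by
        have : 1 / Real.exp 1 ≤ 1 - z := by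
          have := hz.2; rw [hc] at this; linarith
        linarith [lt_of_lt_of_le (show (0:ℝ) < 1 / Real.exp 1 by positivity) this]
      have h₁ : HasDerivAt (fun z : ℝ => 1 - z) (-1) z := (hasDerivAt_id z).const_sub 1
      have hlog := (Real.hasDerivAt_log h0.ne').comp z h₁
      have := hlog.const_mul (-(vb / Real.exp 1))
      refine this.congr_deriv ?_
      field_simp
    have hint : IntervalIntegrable (fun z => vb / (Real.exp 1 * (1 - z))) volume 0 c := by
      refine ContinuousOn.intervalIntegrable (ContinuousOn.div continuousOn_const ?_ ?_)
      · exact (continuous_const.mul (continuous_const.sub continuous_id)).continuousOn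
      · intro x hx
        rw [Set.uIcc_of_le hc0.le] at hx
        have h0 : 0 < 1 - x := by
          have : 1 / Real.exp 1 ≤ 1 - x := by
            have := hx.2; rw [hc] at this; linarith
          linarith [lt_of_lt_of_le (show (0:ℝ) < 1 / Real.exp 1 by positivity) this]
        positivity
    rw [intervalIntegral.integral_eq_sub_of_hasDerivAt hderiv hint]
    have hlogc : Real.log (1 - c) = -1 := by
      rw [h1c, one_div, Real.log_inv, Real.log_exp]
    rw [hlogc]
    simp
  have i2 : ∫ z in c..1, erQuantile vb z = vb / Real.exp 1 := by
    have heq : Set.EqOn (erQuantile vb) (fun _ => vb) (Set.uIcc c 1) := by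
      intro z hz
      rw [Set.uIcc_of_le hc1.le] at hz
      unfold erQuantile
      rw [if_neg (not_lt.mpr hz.1)]
    rw [intervalIntegral.integral_congr heq, intervalIntegral.integral_const, smul_eq_mul,
      h1c]
    ring
  have := intervalIntegral.integral_add_adjacent_intervals (hII 0 c) (hII c 1)
  rw [← this, i1, i2]
  ring

lemma integral_tail (v : ℝ) :
    ∫ z in (0:ℝ)..1, (if z < 1 - 1 / Real.exp 1 then (0:ℝ) else v) = v / Real.exp 1 := by
  have he : (0:ℝ) < Real.exp 1 := Real.exp_pos 1
  set c : ℝ := 1 - 1 / Real.exp 1 with hc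
  have hc0 : 0 < c := er_c_pos
  have hc1 : c < 1 := er_c_lt_one
  have hfun : (fun z => if z < c then (0:ℝ) else v)
      = fun z => Set.indicator (Set.Ici c) (fun _ => v) z := by
    funext z
    rw [Set.indicator_apply]
    by_cases h : z < c
    · rw [if_pos h, if_neg (by simpa using not_le.mpr h)]
    · rw [if_neg h, if_pos (by simpa using not_lt.mp h)]
  rw [hfun, intervalIntegral.integral_of_le zero_le_one,
    setIntegral_indicator measurableSet_Ici]
  have hset : Set.Ioc (0:ℝ) 1 ∩ Set.Ici c = Set.Icc c 1 := by
    ext z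
    simp only [Set.mem_inter_iff, Set.mem_Ioc, Set.mem_Ici, Set.mem_Icc]
    constructor
    · rintro ⟨⟨_, h2⟩, h3⟩; exact ⟨h3, h2⟩
    · rintro ⟨h1, h2⟩; exact ⟨⟨lt_of_lt_of_le hc0 h1, h2⟩, h1⟩
  rw [hset, setIntegral_const, Real.volume_real_Icc_of_le (by linarith),
    smul_eq_mul]
  have : (1:ℝ) - c = 1 / Real.exp 1 := by rw [hc]; ring
  rw [this]
  ring

lemma fubini_primitive {g : ℝ → ℝ} (hg : Measurable g) {C : ℝ}
    (hC : ∀ s ∈ Set.Icc (0:ℝ) 1, |g s| ≤ C) :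
    ∫ z in (0:ℝ)..1, (∫ s in (0:ℝ)..z, g s) = ∫ s in (0:ℝ)..1, (1 - s) * g s := by
  have hC0 : 0 ≤ C := le_trans (abs_nonneg _) (hC 0 ⟨le_refl 0, zero_le_one⟩)
  set μ : Measure ℝ := volume.restrict (Set.Ioc (0:ℝ) 1) with hμ
  haveI : IsFiniteMeasure μ := by
    constructor
    rw [hμ, Measure.restrict_apply_univ, Real.volume_Ioc]
    exact ENNReal.ofReal_lt_top
  set F : ℝ → ℝ → ℝ := fun z s => Set.indicator (Set.Ioc 0 z) g s with hF
  have hFmeas : Measurable (Function.uncurry F) := by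
    have : Function.uncurry F = Set.indicator {p : ℝ × ℝ | 0 < p.2 ∧ p.2 ≤ p.1}
        (fun p => g p.2) := by
      funext p
      simp only [Function.uncurry, hF, Set.indicator_apply, Set.mem_Ioc, Set.mem_setOf_eq]
    rw [this]
    exact (hg.comp measurable_snd).indicator
      ((measurableSet_lt measurable_const measurable_snd).inter
        (measurableSet_le measurable_snd measurable_fst))
  have hFint : Integrable (Function.uncurry F) (μ.prod μ) := by
    refine Integrable.mono' (integrable_const C) hFmeas.aestronglyMeasurable ?_
    rw [hμ, Measure.prod_restrict]
    refine (ae_restrict_iff' (measurableSet_Ioc.prod measurableSet_Ioc)).mpr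
      (Filter.Eventually.of_forall ?_)
    rintro ⟨z, s⟩ hp
    simp only [Set.mem_prod, Set.mem_Ioc] at hp
    simp only [Function.uncurry, hF, Real.norm_eq_abs]
    rw [Set.indicator_apply]
    split_ifs with h
    · exact hC s ⟨hp.2.1.le, hp.2.2⟩
    · simpa using hC0
  have lhs_eq : ∫ z in (0:ℝ)..1, (∫ s in (0:ℝ)..z, g s) = ∫ z, (∫ s, F z s ∂μ) ∂μ := by
    rw [intervalIntegral.integral_of_le zero_le_one]
    refine setIntegral_congr_fun measurableSet_Ioc fun z hz => ?_
    rw [intervalIntegral.integral_of_le hz.1.le, hμ,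
      setIntegral_indicator measurableSet_Ioc,
      Set.inter_eq_self_of_subset_right (Set.Ioc_subset_Ioc_right hz.2)]
  have rhs_eq : ∫ s, (∫ z, F z s ∂μ) ∂μ = ∫ s in (0:ℝ)..1, (1 - s) * g s := by
    rw [intervalIntegral.integral_of_le zero_le_one]
    refine setIntegral_congr_fun measurableSet_Ioc fun s hs => ?_
    have hfun : (fun z => F z s) = fun z => Set.indicator (Set.Ici s) (fun _ => g s) z := by
      funext z
      simp only [hF, Set.indicator_apply, Set.mem_Ioc, Set.mem_Ici]
      by_cases h : s ≤ z
      · rw [if_pos ⟨hs.1, h⟩, if_pos h]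
      · rw [if_neg (fun hh => h hh.2), if_neg h]
    rw [hfun, hμ, setIntegral_indicator measurableSet_Ici]
    have hset : Set.Ioc (0:ℝ) 1 ∩ Set.Ici s = Set.Icc s 1 := by
      ext z
      simp only [Set.mem_inter_iff, Set.mem_Ioc, Set.mem_Ici, Set.mem_Icc]
      constructor
      · rintro ⟨⟨_, h2⟩, h3⟩; exact ⟨h3, h2⟩
      · rintro ⟨h1, h2⟩; exact ⟨⟨lt_of_lt_of_le hs.1 h1, h2⟩, h1⟩
    rw [hset, setIntegral_const, Real.volume_real_Icc_of_le (by linarith [hs.2]),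
      smul_eq_mul]
  rw [lhs_eq, MeasureTheory.integral_integral_swap hFint, rhs_eq]

/-- the single-bidder regret lower bound of Proposition 2:
full surplus `∫_0^1 Σ_j φ_j(z) dz` minus expected revenue `∫_0^1 T(z) dz`
is at least `Σ_j v̄_j/e`. -/
theorem stmt_11 {J : Type*} [Fintype J] (vbar : J → ℝ) (hvbar : ∀ j, 0 < vbar j)
    (Q : J → ℝ → ℝ) (hQm : ∀ j, Measurable (Q j))
    (hQ : ∀ j, ∀ z ∈ Set.Icc (0:ℝ) 1, 0 ≤ Q j z ∧ Q j z ≤ 1)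
    (U0 : ℝ) (hU0 : 0 ≤ U0) (T : ℝ → ℝ)
    (hT : ∀ z, T z = (∑ j, erQuantile (vbar j) z * Q j z) - U0
      - ∫ s in (0:ℝ)..z, ∑ j, erQuantileDeriv (vbar j) s * Q j s) :
    (∑ j, vbar j / Real.exp 1) ≤
      (∫ z in (0:ℝ)..1, ∑ j, erQuantile (vbar j) z) - ∫ z in (0:ℝ)..1, T z := by
  classical
  have he : (0:ℝ) < Real.exp 1 := Real.exp_pos 1
  set g : ℝ → ℝ := fun s => ∑ j, erQuantileDeriv (vbar j) s * Q j s with hgdef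
  set Sphi : ℝ → ℝ := fun z => ∑ j, erQuantile (vbar j) z * Q j z with hSdef
  set H : ℝ → ℝ := fun z => ∫ s in (0:ℝ)..z, g s with hHdef
  have hsub : Set.uIoc (0:ℝ) 1 ⊆ Set.Icc 0 1 := by
    rw [Set.uIoc_of_le zero_le_one]; exact Set.Ioc_subset_Icc_self
  -- measurability
  have hgm : Measurable g := by
    apply Finset.measurable_sum
    intro j _
    exact (erQuantileDeriv_measurable _).mul (hQm j)
  have hSm : Measurable Sphi := by
    apply Finset.measurable_sum
    intro j _
    exact (erQuantile_measurable _).mul (hQm j)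
  -- bounds
  have hCg0 : (0:ℝ) ≤ ∑ j, vbar j * Real.exp 1 :=
    Finset.sum_nonneg fun j _ => mul_nonneg (hvbar j).le he.le
  have hCS0 : (0:ℝ) ≤ ∑ j, vbar j := Finset.sum_nonneg fun j _ => (hvbar j).le
  have hgb : ∀ s ∈ Set.Icc (0:ℝ) 1, |g s| ≤ ∑ j, vbar j * Real.exp 1 := by
    intro s hs
    have h1 : 0 ≤ g s := Finset.sum_nonneg fun j _ =>
      mul_nonneg (erQuantileDeriv_nonneg (hvbar j).le s) (hQ j s hs).1
    have h2 : g s ≤ ∑ j, vbar j * Real.exp 1 := by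
      refine Finset.sum_le_sum fun j _ => ?_
      calc erQuantileDeriv (vbar j) s * Q j s
          ≤ erQuantileDeriv (vbar j) s * 1 :=
            mul_le_mul_of_nonneg_left (hQ j s hs).2 (erQuantileDeriv_nonneg (hvbar j).le s)
        _ = erQuantileDeriv (vbar j) s := mul_one _
        _ ≤ vbar j * Real.exp 1 := erQuantileDeriv_le (hvbar j).le s
    exact abs_le.mpr ⟨by linarith, h2⟩
  have hSb : ∀ s ∈ Set.Icc (0:ℝ) 1, |Sphi s| ≤ ∑ j, vbar j := by
    intro s hs
    have h1 : 0 ≤ Sphi s := Finset.sum_nonneg fun j _ =>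
      mul_nonneg (erQuantile_nonneg (hvbar j).le s) (hQ j s hs).1
    have h2 : Sphi s ≤ ∑ j, vbar j := by
      refine Finset.sum_le_sum fun j _ => ?_
      calc erQuantile (vbar j) s * Q j s
          ≤ erQuantile (vbar j) s * 1 :=
            mul_le_mul_of_nonneg_left (hQ j s hs).2 (erQuantile_nonneg (hvbar j).le s)
        _ = erQuantile (vbar j) s := mul_one _
        _ ≤ vbar j := erQuantile_le (hvbar j).le s
    exact abs_le.mpr ⟨by linarith, h2⟩
  -- integrability
  have hgI : IntervalIntegrable g volume 0 1 :=
    II_of_bound g 0 1 hgm _ fun z hz => hgb z (hsub hz)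
  have hSI : IntervalIntegrable Sphi volume 0 1 :=
    II_of_bound Sphi 0 1 hSm _ fun z hz => hSb z (hsub hz)
  have hgIcc : IntegrableOn g (Set.Icc (0:ℝ) 1) := by
    rw [integrableOn_Icc_iff_integrableOn_Ioc]
    exact hgI.1
  have hHI : IntervalIntegrable H volume 0 1 := by
    apply ContinuousOn.intervalIntegrable
    rw [Set.uIcc_of_le zero_le_one]
    have := intervalIntegral.continuousOn_primitive_interval
      (a := (0:ℝ)) (b := 1) (f := g) (μ := volume)
      (by rw [Set.uIcc_of_le zero_le_one]; exact hgIcc)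
    rw [Set.uIcc_of_le zero_le_one] at this
    exact this
  have h1g : IntervalIntegrable (fun s => (1 - s) * g s) volume 0 1 := by
    refine II_of_bound _ 0 1 ((measurable_const.sub measurable_id).mul hgm)
      (∑ j, vbar j * Real.exp 1) fun z hz => ?_
    have hz' := hsub hz
    have habs : |1 - z| ≤ 1 := abs_le.mpr ⟨by linarith [hz'.2], by linarith [hz'.1]⟩
    calc |(1 - z) * g z| = |1 - z| * |g z| := abs_mul _ _
      _ ≤ 1 * (∑ j, vbar j * Real.exp 1) :=
          mul_le_mul habs (hgb z hz') (abs_nonneg _) zero_le_one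
      _ = _ := one_mul _
  -- the integral of T
  have hTeq : ∫ z in (0:ℝ)..1, T z
      = (∫ z in (0:ℝ)..1, Sphi z) - U0 - ∫ z in (0:ℝ)..1, H z := by
    have hTz : ∀ z, T z = Sphi z - U0 - H z := fun z => hT z
    rw [intervalIntegral.integral_congr (fun z _ => hTz z),
      intervalIntegral.integral_sub ((hSI.sub (intervalIntegrable_const (c := U0)))) hHI,
      intervalIntegral.integral_sub hSI (intervalIntegrable_const (c := U0)),
      intervalIntegral.integral_const]
    simp
  -- Fubini
  have hfub : ∫ z in (0:ℝ)..1, H z = ∫ s in (0:ℝ)..1, (1 - s) * g s :=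
    fubini_primitive hgm hgb
  -- pointwise identity
  have hptw : ∀ s, Sphi s - (1 - s) * g s
      = ∑ j, (if s < 1 - 1 / Real.exp 1 then (0:ℝ) else vbar j) * Q j s := by
    intro s
    show (∑ j, erQuantile (vbar j) s * Q j s) - (1 - s) * ∑ j, erQuantileDeriv (vbar j) s * Q j s
      = _
    rw [Finset.mul_sum, ← Finset.sum_sub_distrib]
    refine Finset.sum_congr rfl fun j _ => ?_
    have hid := erQuantile_sub (vbar j) s
    calc erQuantile (vbar j) s * Q j s - (1 - s) * (erQuantileDeriv (vbar j) s * Q j s)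
        = (erQuantile (vbar j) s - (1 - s) * erQuantileDeriv (vbar j) s) * Q j s := by ring
      _ = _ := by rw [hid]
  -- key bound
  have hIndI : IntervalIntegrable
      (fun s => ∑ j, (if s < 1 - 1 / Real.exp 1 then (0:ℝ) else vbar j)) volume 0 1 := by
    refine II_of_bound _ 0 1 ?_ (∑ j, vbar j) fun z _ => ?_
    · apply Finset.measurable_sum
      intro j _
      exact Measurable.ite (measurableSet_lt measurable_id measurable_const)
        measurable_const measurable_const
    · have h1 : 0 ≤ ∑ j, (if z < 1 - 1 / Real.exp 1 then (0:ℝ) else vbar j) :=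
        Finset.sum_nonneg fun j _ => by split_ifs; exacts [le_refl 0, (hvbar j).le]
      have h2 : (∑ j, (if z < 1 - 1 / Real.exp 1 then (0:ℝ) else vbar j)) ≤ ∑ j, vbar j :=
        Finset.sum_le_sum fun j _ => by split_ifs; exacts [(hvbar j).le, le_refl _]
      exact abs_le.mpr ⟨by linarith, h2⟩
  have key : (∫ z in (0:ℝ)..1, Sphi z) - (∫ s in (0:ℝ)..1, (1 - s) * g s)
      ≤ ∑ j, vbar j / Real.exp 1 := by
    rw [← intervalIntegral.integral_sub hSI h1g]
    have hmono : ∫ s in (0:ℝ)..1, (Sphi s - (1 - s) * g s)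
        ≤ ∫ s in (0:ℝ)..1, ∑ j, (if s < 1 - 1 / Real.exp 1 then (0:ℝ) else vbar j) := by
      refine intervalIntegral.integral_mono_on zero_le_one (hSI.sub h1g) hIndI fun s hs => ?_
      rw [hptw s]
      refine Finset.sum_le_sum fun j _ => ?_
      exact mul_le_of_le_one_right
        (by split_ifs; exacts [le_refl 0, (hvbar j).le]) (hQ j s hs).2
    have hval : ∫ s in (0:ℝ)..1, ∑ j, (if s < 1 - 1 / Real.exp 1 then (0:ℝ) else vbar j)
        = ∑ j, vbar j / Real.exp 1 := by
      rw [intervalIntegral.integral_finset_sum]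
      · exact Finset.sum_congr rfl fun j _ => integral_tail (vbar j)
      · intro j _
        refine II_of_bound _ 0 1 (Measurable.ite
          (measurableSet_lt measurable_id measurable_const) measurable_const measurable_const)
          (vbar j) fun z _ => ?_
        split_ifs
        · rw [abs_zero]; exact (hvbar j).le
        · rw [abs_of_pos (hvbar j)]
    linarith
  -- full surplus
  have hIsum : ∫ z in (0:ℝ)..1, ∑ j, erQuantile (vbar j) z
      = ∑ j, 2 * vbar j / Real.exp 1 := by
    rw [intervalIntegral.integral_finset_sum]
    · exact Finset.sum_congr rfl fun j _ => integral_erQuantile (hvbar j).le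
    · intro j _
      refine II_of_bound _ 0 1 (erQuantile_measurable _) (vbar j) fun z _ => ?_
      exact abs_le.mpr ⟨by linarith [erQuantile_nonneg (hvbar j).le z, (hvbar j).le],
        erQuantile_le (hvbar j).le z⟩
  have hsplit : ∑ j, 2 * vbar j / Real.exp 1
      = (∑ j, vbar j / Real.exp 1) + ∑ j, vbar j / Real.exp 1 := by
    rw [← Finset.sum_add_distrib]
    exact Finset.sum_congr rfl fun j _ => by ring
  rw [hIsum]
  linarith [key, hU0, hTeq, hfub, hsplit]
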